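/- Let 𝔉 be any finite set of acyclic rooted graphs. Then there is a (|P|, |P|+|𝔉|)-GNN A such that for all pointed graphs (G,v), run_A(G, emb_G)(v) = emb_G(v) ⊕ hom(𝔉,(G,v)). -/

import Mathlib

open Classical

/-! ### Graphs with `p` binary node features -/

/-- A finite undirected graph with node labels over `p` binary features. -/
structure LabGraph (p : ℕ) : Type 1 where
  V : Type
  fintypeV : Fintype V
  decEqV : DecidableEq V
  adj : V → V → Prop
  symm : ∀ {u v}, adj u v → adj v u
  irrefl : ∀ v, ¬ adj v v
  lab : V → Fin p → Prop

attribute [instance] LabGraph.fintypeV LabGraph.decEqV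

namespace LabGraph

variable {p : ℕ}

/-- The finset of neighbours of a node. -/
noncomputable def nbrFinset (G : LabGraph p) (v : G.V) : Finset G.V :=
  Finset.univ.filter (fun u => G.adj v u)

/-- Multi-hot label encoding. -/
noncomputable def embG (G : LabGraph p) (v : G.V) : Fin p → ℝ :=
  fun i => if G.lab v i then 1 else 0

/-- `G.within v r u` : node `u` is at distance at most `r` from `v`. -/
def within (G : LabGraph p) (v : G.V) : ℕ → G.V → Prop
  | 0 => fun u => u = v
  | (r+1) => fun u => G.within v r u ∨ ∃ w, G.within v r w ∧ G.adj w u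

theorem within_self (G : LabGraph p) (v : G.V) : ∀ r, G.within v r v
  | 0 => rfl
  | (r+1) => Or.inl (G.within_self v r)

/-- Induced subgraph on a set of nodes. -/
noncomputable def induce (G : LabGraph p) (S : Set G.V) : LabGraph p where
  V := {u // u ∈ S}
  fintypeV := Fintype.ofFinite _
  decEqV := inferInstance
  adj a b := G.adj a.1 b.1
  symm h := G.symm h
  irrefl a h := G.irrefl a.1 h
  lab a := G.lab a.1

/-- `G_v^r` : the induced subgraph on the radius-`r` neighbourhood of `v`. -/
noncomputable def ball (G : LabGraph p) (v : G.V) (r : ℕ) : LabGraph p :=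
  G.induce {u | G.within v r u}

/-- The centre of `G_v^r`, as a node of `G_v^r`. -/
noncomputable def ballCenter (G : LabGraph p) (v : G.V) (r : ℕ) : (G.ball v r).V :=
  ⟨v, G.within_self v r⟩

end LabGraph

/-! ### GNNs -/

/-- A single message-passing layer: aggregation over the multiset of neighbour
embeddings and combination of the node embedding (concatenated via `Fin.append`)
with the aggregated value. -/
structure GNNLayer (Din Dout : ℕ) : Type where
  agg : Multiset (Fin Din → ℝ) → (Fin Din → ℝ)
  com : (Fin (Din + Din) → ℝ) → (Fin Dout → ℝ)

/-- A `(D,D')`-GNN: a nonempty sequence of layers with matching dimensions. -/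
inductive GNN : ℕ → ℕ → Type
  | last {D D'} (l : GNNLayer D D') : GNN D D'
  | cons {D Dm D'} (l : GNNLayer D Dm) (rest : GNN Dm D') : GNN D D'

noncomputable def GNNLayer.apply {p Din Dout : ℕ} (l : GNNLayer Din Dout) (G : LabGraph p)
    (emb : G.V → Fin Din → ℝ) : G.V → Fin Dout → ℝ :=
  fun v => l.com (Fin.append (emb v) (l.agg ((G.nbrFinset v).val.map emb)))

/-- Running a GNN on an embedded graph. -/
noncomputable def GNN.run {p : ℕ} : {D D' : ℕ} → GNN D D' → (G : LabGraph p) →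
    (G.V → Fin D → ℝ) → (G.V → Fin D' → ℝ)
  | _, _, .last l, G, emb => l.apply G emb
  | _, _, .cons l rest, G, emb => rest.run G (l.apply G emb)

/-- The node classifier of a `(p,1)`-GNN (as a proposition: value `1` ↔ output `> 0`). -/
def GNN.clsP {p : ℕ} (A : GNN p 1) (G : LabGraph p) (v : G.V) : Prop :=
  0 < A.run G G.embG v 0

/-- The node classifier of a `(p,1)`-GNN, as a boolean value. -/
noncomputable def GNN.cls {p : ℕ} (A : GNN p 1) (G : LabGraph p) (v : G.V) : Bool :=
  if A.clsP G v then true else false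

/-! ### Hierarchical Ego GNNs -/

/-- A `(D,D')`-HE-GNN of nesting depth `d`. -/
inductive HEGNN : ℕ → ℕ → ℕ → Type
  | base {D D'} (A : GNN D D') : HEGNN 0 D D'
  | nest {d D D'' D'} (B : HEGNN d (D+1) D'') (C : GNN (D + D'') D') : HEGNN (d+1) D D'

noncomputable def HEGNN.run {p : ℕ} : {d D D' : ℕ} → HEGNN d D D' → (G : LabGraph p) →
    (G.V → Fin D → ℝ) → (G.V → Fin D' → ℝ)
  | _, _, _, .base A, G, emb => A.run G emb
  | _, _, _, .nest B C, G, emb =>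
      C.run G (fun v => Fin.append (emb v)
        (B.run G (fun u => Fin.append (emb u) (fun _ => if u = v then (1:ℝ) else 0)) v))

def HEGNN.clsP {p d : ℕ} (A : HEGNN d p 1) (G : LabGraph p) (v : G.V) : Prop :=
  0 < A.run G G.embG v 0

noncomputable def HEGNN.cls {p d : ℕ} (A : HEGNN d p 1) (G : LabGraph p) (v : G.V) : Bool :=
  if A.clsP G v then true else false

/-! ### Hierarchical Ego Subgraph GNNs -/

/-- A `(D,D')`-HES-GNN of depth `d`; each nesting step carries its own radius `r`. -/
inductive HESGNN : ℕ → ℕ → ℕ → Type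
  | base {D D'} (A : GNN D D') : HESGNN 0 D D'
  | nest {d D D'' D'} (r : ℕ) (B : HESGNN d (D+1) D'') (C : GNN (D + D'') D') :
      HESGNN (d+1) D D'

noncomputable def HESGNN.run {p : ℕ} : {d D D' : ℕ} → HESGNN d D D' → (G : LabGraph p) →
    (G.V → Fin D → ℝ) → (G.V → Fin D' → ℝ)
  | _, _, _, .base A, G, emb => A.run G emb
  | _, _, _, .nest r B C, G, emb =>
      C.run G (fun v => Fin.append (emb v)
        (B.run (G.ball v r)
          (fun u => Fin.append (emb u.1) (fun _ => if u.1 = v then (1:ℝ) else 0))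
          (G.ballCenter v r)))

/-- All subgraph restrictions in the HES-GNN use radius `r`. -/
def HESGNN.radIs : {d D D' : ℕ} → ℕ → HESGNN d D D' → Prop
  | _, _, _, _, .base _ => True
  | _, _, _, r, .nest r' B _ => r' = r ∧ B.radIs r

def HESGNN.clsP {p d : ℕ} (A : HESGNN d p 1) (G : LabGraph p) (v : G.V) : Prop :=
  0 < A.run G G.embG v 0

noncomputable def HESGNN.cls {p d : ℕ} (A : HESGNN d p 1) (G : LabGraph p) (v : G.V) : Bool :=
  if A.clsP G v then true else false
/-! ### Graded modal logic GML -/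

inductive GML (p : ℕ) : Type
  | prop (i : Fin p)
  | top
  | and (φ ψ : GML p)
  | not (φ : GML p)
  | dia (k : ℕ) (φ : GML p)

/-- Satisfaction of a GML formula at a node. -/
def GML.sat {p : ℕ} (G : LabGraph p) : GML p → G.V → Prop
  | .prop i, v => G.lab v i
  | .top, _ => True
  | .and φ ψ, v => φ.sat G v ∧ ψ.sat G v
  | .not φ, v => ¬ φ.sat G v
  | .dia k φ, v => k ≤ Nat.card {u : G.V // G.adj v u ∧ φ.sat G u}

/-! ### Graded hybrid logic GML(↓) -/

inductive GMLd (p : ℕ) : Type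
  | prop (i : Fin p)
  | var (x : ℕ)
  | top
  | and (φ ψ : GMLd p)
  | not (φ : GMLd p)
  | dia (k : ℕ) (φ : GMLd p)
  | bind (x : ℕ) (φ : GMLd p)

/-- Satisfaction of a GML(↓) formula at a node, relative to an assignment of
variables to (marked) nodes; `↓x.φ` marks the current node with `x`. -/
def GMLd.sat {p : ℕ} (G : LabGraph p) : GMLd p → (ℕ → Option G.V) → G.V → Prop
  | .prop i, _, v => G.lab v i
  | .var x, g, v => g x = some v
  | .top, _, _ => True
  | .and φ ψ, g, v => φ.sat G g v ∧ ψ.sat G g v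
  | .not φ, g, v => ¬ φ.sat G g v
  | .dia k φ, g, v => k ≤ Nat.card {u : G.V // G.adj v u ∧ φ.sat G g u}
  | .bind x φ, g, v => φ.sat G (Function.update g x (some v)) v

def GMLd.free {p : ℕ} : GMLd p → Set ℕ
  | .prop _ => ∅
  | .var x => {x}
  | .top => ∅
  | .and φ ψ => φ.free ∪ ψ.free
  | .not φ => φ.free
  | .dia _ φ => φ.free
  | .bind x φ => φ.free \ {x}

/-- A sentence has no free variables. -/
def GMLd.Sentence {p : ℕ} (φ : GMLd p) : Prop := φ.free = ∅

/-- The ↓-nesting-depth of a formula. -/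
def GMLd.bindDepth {p : ℕ} : GMLd p → ℕ
  | .prop _ => 0
  | .var _ => 0
  | .top => 0
  | .and φ ψ => max φ.bindDepth ψ.bindDepth
  | .not φ => φ.bindDepth
  | .dia _ φ => φ.bindDepth
  | .bind _ φ => φ.bindDepth + 1

/-- Satisfaction of a sentence (empty assignment). -/
def GMLd.satS {p : ℕ} (G : LabGraph p) (φ : GMLd p) (v : G.V) : Prop :=
  φ.sat G (fun _ => none) v

/-! ### Graded hybrid subgraph logic: the fragment GML(↓_W) -/

inductive GMLW (p : ℕ) : Type
  | prop (i : Fin p)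
  | var (x : ℕ)
  | top
  | and (φ ψ : GMLW p)
  | not (φ : GMLW p)
  | dia (k : ℕ) (φ : GMLW p)
  /-- `↓_{W^r} x. φ`, i.e. `↓x. W^r φ`. -/
  | bindW (x : ℕ) (r : ℕ) (φ : GMLW p)

/-- Restrict an assignment along passage to an induced subgraph: markings of
nodes outside the subgraph disappear. -/
noncomputable def restrictAssign {p : ℕ} {G : LabGraph p} (S : Set G.V)
    (g : ℕ → Option G.V) : ℕ → Option (G.induce S).V :=
  fun x => (g x).bind (fun w => if h : w ∈ S then some ⟨w, h⟩ else none)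

/-- Satisfaction for the fragment GML(↓_W): `↓x.W^r φ` marks the current node `v`
with `x` and evaluates `φ` in the subgraph `G_v^r`. -/
noncomputable def GMLW.sat {p : ℕ} : GMLW p → (G : LabGraph p) → (ℕ → Option G.V) → G.V → Prop
  | .prop i, G, _, v => G.lab v i
  | .var x, _, g, v => g x = some v
  | .top, _, _, _ => True
  | .and φ ψ, G, g, v => φ.sat G g v ∧ ψ.sat G g v
  | .not φ, G, g, v => ¬ φ.sat G g v
  | .dia k φ, G, g, v => k ≤ Nat.card {u : G.V // G.adj v u ∧ φ.sat G g u}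
  | .bindW x r φ, G, g, v =>
      φ.sat (G.ball v r) (restrictAssign _ (Function.update g x (some v))) (G.ballCenter v r)

def GMLW.free {p : ℕ} : GMLW p → Set ℕ
  | .prop _ => ∅
  | .var x => {x}
  | .top => ∅
  | .and φ ψ => φ.free ∪ ψ.free
  | .not φ => φ.free
  | .dia _ φ => φ.free
  | .bindW x _ φ => φ.free \ {x}

def GMLW.Sentence {p : ℕ} (φ : GMLW p) : Prop := φ.free = ∅

/-- The nesting depth of `↓_{W^r}` operators. -/
def GMLW.bindDepth {p : ℕ} : GMLW p → ℕ
  | .prop _ => 0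
  | .var _ => 0
  | .top => 0
  | .and φ ψ => max φ.bindDepth ψ.bindDepth
  | .not φ => φ.bindDepth
  | .dia _ φ => φ.bindDepth
  | .bindW _ _ φ => φ.bindDepth + 1

/-- All `↓_{W}` operators in the formula use radius `r`. -/
def GMLW.radIs {p : ℕ} (r : ℕ) : GMLW p → Prop
  | .prop _ => True
  | .var _ => True
  | .top => True
  | .and φ ψ => φ.radIs r ∧ ψ.radIs r
  | .not φ => φ.radIs r
  | .dia _ φ => φ.radIs r
  | .bindW _ r' φ => r' = r ∧ φ.radIs r

noncomputable def GMLW.satS {p : ℕ} (G : LabGraph p) (φ : GMLW p) (v : G.V) : Prop :=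
  φ.sat G (fun _ => none) v
/-! ### Weisfeiler–Leman and Individualization-Refinement -/

/-- An (ordered) space of colors together with a perfect (injective) hash
function whose domains are: node labelings (initial colors), pairs of a color
and a multiset of colors (refinement), and pairs of a color and a marking
(individualization). -/
structure HashSetup (p : ℕ) : Type 1 where
  C : Type
  linC : LinearOrder C
  hInit : (Fin p → Prop) → C
  hRefine : C → Multiset C → C
  hIndiv : C → Prop → C
  inj : Function.Injective
    (Sum.elim hInit (Sum.elim (fun y : C × Multiset C => hRefine y.1 y.2)
      (fun y : C × Prop => hIndiv y.1 y.2)))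

/-- A coloring is discrete if all color classes are singletons. -/
def Discrete {V C : Type} (col : V → C) : Prop :=
  ∀ u w, col u = col w → u = w

/-- One round of color refinement. -/
noncomputable def wlStep {p : ℕ} (H : HashSetup p) (G : LabGraph p)
    (col : G.V → H.C) : G.V → H.C :=
  fun v => H.hRefine (col v) ((G.nbrFinset v).val.map col)

/-- `wlIter H G d col` = `WL(G, col, d)`. -/
noncomputable def wlIter {p : ℕ} (H : HashSetup p) (G : LabGraph p) :
    ℕ → (G.V → H.C) → (G.V → H.C)
  | 0, col => col
  | (d+1), col => wlStep H G (wlIter H G d col)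

/-- The initial coloring `col_G`. -/
noncomputable def initCol {p : ℕ} (H : HashSetup p) (G : LabGraph p) : G.V → H.C :=
  fun v => H.hInit (G.lab v)

/-- Rose trees labeled by multisets of colors.  (Children are kept in a list;
the isomorphism relation below disregards their order.) -/
inductive CTree (C : Type) : Type
  | node (label : Multiset C) (children : List (CTree C))

/-- Isomorphism of trees whose nodes are labeled by multisets of colors. -/
inductive CTree.Iso {C : Type} : CTree C → CTree C → Prop
  | node {l : Multiset C} {cs1 cs2 : List (CTree C)}
      (e : Fin cs1.length ≃ Fin cs2.length)
      (h : ∀ i : Fin cs1.length, CTree.Iso (cs1.get i) (cs2.get (e i))) :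
      CTree.Iso (.node l cs1) (.node l cs2)

/-- The multiset of all colors of a coloring. -/
noncomputable def colMultiset {p : ℕ} (H : HashSetup p) (G : LabGraph p)
    (col : G.V → H.C) : Multiset H.C :=
  Finset.univ.val.map col

/-- `WLIR H G d col` = the IR tree `WL-IR(G, col, d)` with at most `d`
individualization steps, with colorings recorded by their color multisets. -/
noncomputable def WLIR {p : ℕ} (H : HashSetup p) (G : LabGraph p) :
    ℕ → (G.V → H.C) → CTree H.C
  | 0, col => .node (colMultiset H G (wlIter H G (Fintype.card G.V) col)) []
  | (d+1), col =>
    let col' := wlIter H G (Fintype.card G.V) col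
    if hdisc : Discrete col' then .node (colMultiset H G col') []
    else
      letI := H.linC
      let bigs : Finset H.C := (Finset.univ.image col').filter
        (fun c => 1 < (Finset.univ.filter (fun v => col' v = c)).card)
      have hne : bigs.Nonempty := by
        simp only [Discrete, not_forall] at hdisc
        obtain ⟨u, w, hc, hne'⟩ := hdisc
        refine ⟨col' u, Finset.mem_filter.mpr
          ⟨Finset.mem_image_of_mem _ (Finset.mem_univ u), ?_⟩⟩
        exact Finset.one_lt_card.mpr
          ⟨u, by simp, w, by simp [hc.symm], hne'⟩
      let c := bigs.min' hne
      .node (colMultiset H G col')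
        (((Finset.univ.filter (fun v => col' v = c)).toList).map
          (fun vi => WLIR H G d (fun v => H.hIndiv (col' v) (v = vi))))

/-- `G ≡_{WL-IR-d} G'` : the IR trees with `d` individualization steps are
isomorphic. -/
noncomputable def WLIRequiv {p : ℕ} (H : HashSetup p) (G G' : LabGraph p) (d : ℕ) : Prop :=
  CTree.Iso (WLIR H G d (initCol H G)) (WLIR H G' d (initCol H G'))

/-- Isomorphism of labeled graphs. -/
def LabGraph.Iso {p : ℕ} (G G' : LabGraph p) : Prop :=
  ∃ f : G.V ≃ G'.V, (∀ u v, G.adj u v ↔ G'.adj (f u) (f v)) ∧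
    ∀ v i, G.lab v i ↔ G'.lab (f v) i
/-! ### The k-dimensional Weisfeiler–Leman test -/

/-- The type of `k`-WL colors after `i` refinement rounds (shared between all
graphs, so colors of different graphs are directly comparable). -/
def KColor (p k : ℕ) : ℕ → Type
  | 0 => ((Fin k → Fin k → Prop) × (Fin k → Fin k → Prop) × (Fin k → Fin p → Prop))
  | (i+1) => KColor p k i × (Fin k → Multiset (KColor p k i))

/-- The `k`-WL coloring of `k`-tuples after `i` rounds: the initial color is the
isomorphism type of the tuple (equalities, adjacencies, labels); each round
refines by, for each position, the multiset of colors of all one-point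
modifications of the tuple. -/
noncomputable def kwl (p k : ℕ) (G : LabGraph p) :
    (i : ℕ) → (Fin k → G.V) → KColor p k i
  | 0, t => (fun i j => t i = t j, fun i j => G.adj (t i) (t j), fun i a => G.lab (t i) a)
  | (i+1), t => (kwl p k G i t,
      fun j => Finset.univ.val.map (fun w => kwl p k G i (Function.update t j w)))

/-- `(G,v)` and `(G',v')` are *not* distinguished by the `k`-dimensional WL test:
the colors of the constant tuples `(v,…,v)` and `(v',…,v')` agree at every round
(equivalently, the stable colors agree). -/
noncomputable def kwlEquiv (p k : ℕ) (G : LabGraph p) (v : G.V) (G' : LabGraph p) (v' : G'.V) : Prop :=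
  ∀ i : ℕ, kwl p k G i (fun _ => v) = kwl p k G' i (fun _ => v')
/-! ### Rooted graphs, homomorphism counts, Sum/ReLU-FFNN GNNs, degree bounds -/

namespace LabGraph
variable {p : ℕ}

/-- `(F,u)` is a rooted graph: every node is reachable from `u`. -/
def Rooted (F : LabGraph p) (u : F.V) : Prop := ∀ w, ∃ r, F.within u r w

/-- Every node of `G` has degree at most `N`. -/
def degLe (G : LabGraph p) (N : ℕ) : Prop := ∀ v, Nat.card {u : G.V // G.adj v u} ≤ N

end LabGraph

/-- The number of homomorphisms from the pointed graph `(F,u)` to `(G,v)`: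
maps sending the root to `v`, preserving edges, and preserving labels. -/
noncomputable def homCount {p : ℕ} (F G : LabGraph p) (u : F.V) (v : G.V) : ℕ :=
  Nat.card {h : F.V → G.V //
    h u = v ∧ (∀ ⦃w w'⦄, F.adj w w' → G.adj (h w) (h w')) ∧
    ∀ w i, F.lab w i → G.lab (h w) i}

/-- Pointwise sum aggregation. -/
def sumAgg (D : ℕ) : Multiset (Fin D → ℝ) → (Fin D → ℝ) :=
  fun M i => (M.map (fun x => x i)).sum

/-- ReLU feed-forward neural networks: compositions of affine maps and
coordinatewise ReLU. -/
inductive IsReLUFFNN : {n m : ℕ} → ((Fin n → ℝ) → (Fin m → ℝ)) → Prop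
  | affine {n m : ℕ} (W : Matrix (Fin m) (Fin n) ℝ) (b : Fin m → ℝ) :
      IsReLUFFNN (fun x => W.mulVec x + b)
  | relu {n : ℕ} : IsReLUFFNN (fun (x : Fin n → ℝ) i => max 0 (x i))
  | comp {n m k : ℕ} {f : (Fin n → ℝ) → (Fin m → ℝ)} {g : (Fin m → ℝ) → (Fin k → ℝ)} :
      IsReLUFFNN f → IsReLUFFNN g → IsReLUFFNN (fun x => g (f x))

/-- A layer uses Sum aggregation and a ReLU-FFNN combination function. -/
def GNNLayer.SumReLU {Din Dout : ℕ} (l : GNNLayer Din Dout) : Prop :=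
  l.agg = sumAgg Din ∧ IsReLUFFNN l.com

def GNN.SumReLU : {D D' : ℕ} → GNN D D' → Prop
  | _, _, .last l => l.SumReLU
  | _, _, .cons l rest => l.SumReLU ∧ rest.SumReLU

def HEGNN.SumReLU : {d D D' : ℕ} → HEGNN d D D' → Prop
  | _, _, _, .base A => A.SumReLU
  | _, _, _, .nest B C => B.SumReLU ∧ C.SumReLU
/-! ### Cycles, acyclicity, ego-rank, tree-width -/

namespace LabGraph
variable {p : ℕ}

/-- There is a cycle (length ≥ 3, distinct nodes, consecutive nodes adjacent,
cyclically) all of whose nodes lie in `S`. -/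
def CycleIn (G : LabGraph p) (S : Set G.V) : Prop :=
  ∃ (n : ℕ) (c : Fin n → G.V), 3 ≤ n ∧ Function.Injective c ∧ (∀ i, c i ∈ S) ∧
    ∀ i : Fin n, G.adj (c i) (c ⟨(i.val + 1) % n, Nat.mod_lt _ i.pos⟩)

/-- `G` is acyclic. -/
def Acyclic (G : LabGraph p) : Prop := ¬ G.CycleIn Set.univ

/-- `(G,v)` is c-acyclic: every cycle of `G` passes through `v`. -/
def CAcyclic (G : LabGraph p) (v : G.V) : Prop :=
  ∀ (n : ℕ) (c : Fin n → G.V), 3 ≤ n → Function.Injective c →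
    (∀ i : Fin n, G.adj (c i) (c ⟨(i.val + 1) % n, Nat.mod_lt _ i.pos⟩)) →
    ∃ i, c i = v

/-- Reachability inside a set `S` (paths are required to stay in `S`). -/
inductive ReachIn (G : LabGraph p) (S : Set G.V) : G.V → G.V → Prop
  | refl {a} (ha : a ∈ S) : ReachIn G S a a
  | tail {a b c} : ReachIn G S a b → G.adj b c → c ∈ S → ReachIn G S a c

/-- The set `S` induces a connected subgraph. -/
def ConnectedIn (G : LabGraph p) (S : Set G.V) : Prop :=
  ∀ a ∈ S, ∀ b ∈ S, G.ReachIn S a b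

/-- `G` is connected. -/
def Connected (G : LabGraph p) : Prop := ∀ a b : G.V, ∃ r, G.within a r b

end LabGraph

/-! #### Ego-rank -/

/-- Transitive closure of a partial map `dep` (so `DepCl dep w x` means
`x ∈ deps(w) = {dep(w), dep(dep(w)), …} \ {⊥}`). -/
inductive DepCl {V : Type} (dep : V → Option V) : V → V → Prop
  | base {w x} : dep w = some x → DepCl dep w x
  | step {w x y} : DepCl dep w x → dep x = some y → DepCl dep w y

/-- `deps(w)` as a set. -/
def deps {V : Type} (dep : V → Option V) (w : V) : Set V := {x | DepCl dep w x}

/-- `dep` is a dependency function for the rooted graph `(G,v)`. -/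
def IsDepFun {p : ℕ} (G : LabGraph p) (v : G.V) (dep : G.V → Option G.V) : Prop :=
  dep v = none ∧
  (∀ {w u}, G.adj w u → dep w = dep u ∨ w ∈ deps dep u ∨ u ∈ deps dep w) ∧
  (∀ o : Option G.V, ¬ G.CycleIn {w | dep w = o})

/-- The node rank of a node: `|deps(w)|`. -/
noncomputable def nodeRank {V : Type} (dep : V → Option V) (w : V) : ℕ :=
  Nat.card {x // DepCl dep w x}

/-- Ego-rank: the smallest achievable maximum node rank over all dependency
functions. -/
noncomputable def egoRank {p : ℕ} (G : LabGraph p) (v : G.V) : ℕ :=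
  sInf {k | ∃ dep, IsDepFun G v dep ∧ ∀ w, nodeRank dep w ≤ k}

/-! #### Tree decompositions and tree-width -/

/-- A tree decomposition of `G`: a (connected, acyclic) tree `T` with bags
covering all nodes and edges, such that each node's bags form a connected
subtree. -/
structure TreeDecomp (p : ℕ) (G : LabGraph p) : Type 1 where
  T : LabGraph 0
  conn : T.Connected
  acyc : T.Acyclic
  bag : T.V → Set G.V
  cover_v : ∀ u : G.V, ∃ t, u ∈ bag t
  cover_e : ∀ {u w : G.V}, G.adj u w → ∃ t, u ∈ bag t ∧ w ∈ bag t
  subtree : ∀ u : G.V, T.ConnectedIn {t | u ∈ bag t}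

/-- Tree-width: minimum over tree decompositions of (maximum bag size − 1). -/
noncomputable def treewidth {p : ℕ} (G : LabGraph p) : ℕ :=
  sInf {w | ∃ D : TreeDecomp p G, ∀ t, Nat.card (D.bag t) ≤ w + 1}
/-! ### Special graphs: cycles, disjoint unions, grids (all labels empty) -/

/-- The cycle graph `C_n` (for `n ≥ 3`), with empty node labels. -/
def cycleGraph (p n : ℕ) : LabGraph p where
  V := Fin n
  fintypeV := inferInstance
  decEqV := inferInstance
  adj i j := i ≠ j ∧ ((i.val + 1) % n = j.val ∨ (j.val + 1) % n = i.val)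
  symm h := ⟨h.1.symm, h.2.symm⟩
  irrefl _ h := h.1 rfl
  lab _ _ := False

/-- Disjoint union of two graphs. -/
def LabGraph.disjUnion {p : ℕ} (G1 G2 : LabGraph p) : LabGraph p where
  V := G1.V ⊕ G2.V
  fintypeV := inferInstance
  decEqV := inferInstance
  adj a b :=
    match a, b with
    | .inl x, .inl y => G1.adj x y
    | .inr x, .inr y => G2.adj x y
    | _, _ => False
  symm {a b} h := by
    cases a <;> cases b <;> simp_all <;> first | exact G1.symm h | exact G2.symm h
  irrefl a h := by
    cases a
    · exact G1.irrefl _ h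
    · exact G2.irrefl _ h
  lab a i :=
    match a with
    | .inl x => G1.lab x i
    | .inr x => G2.lab x i

/-- The `n × 2` grid graph, with empty node labels. -/
def gridGraph (p n : ℕ) : LabGraph p where
  V := Fin n × Fin 2
  fintypeV := inferInstance
  decEqV := inferInstance
  adj a b := (a.2 = b.2 ∧ (a.1.val + 1 = b.1.val ∨ b.1.val + 1 = a.1.val)) ∨
    (a.1 = b.1 ∧ a.2 ≠ b.2)
  symm h := by
    rcases h with ⟨h1, h2⟩ | ⟨h1, h2⟩
    · exact Or.inl ⟨h1.symm, h2.symm⟩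
    · exact Or.inr ⟨h1.symm, h2.symm⟩
  irrefl a h := by
    rcases h with ⟨_, h2 | h2⟩ | ⟨_, h2⟩
    · omega
    · omega
    · exact h2 rfl
  lab _ _ := False
/-! ### The witness graphs of Rattan–Seppelt: a central 4-cycle with attached
triangles and 6-cycles. -/

/-- Vertex type: 4 square nodes, 4 triangles (3 nodes each), 4 hexagons
(6 nodes each). -/
abbrev RSV : Type := Fin 4 ⊕ (Fin 4 × Fin 3) ⊕ (Fin 4 × Fin 6)

/-- Adjacency, parameterized by the owner (square corner) of each triangle and
of each hexagon: the square is a 4-cycle; each triangle/hexagon is complete to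
its owner; triangles are 3-cycles, hexagons are 6-cycles. -/
def rsAdj (tO hO : Fin 4 → Fin 4) : RSV → RSV → Prop
  | .inl a, .inl b => a ≠ b ∧ ((a.val + 1) % 4 = b.val ∨ (b.val + 1) % 4 = a.val)
  | .inl a, .inr (.inl (t, _)) => a = tO t
  | .inr (.inl (t, _)), .inl a => a = tO t
  | .inl a, .inr (.inr (s, _)) => a = hO s
  | .inr (.inr (s, _)), .inl a => a = hO s
  | .inr (.inl (t, i)), .inr (.inl (t', i')) => t = t' ∧ i ≠ i'
  | .inr (.inr (s, j)), .inr (.inr (s', j')) =>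
      s = s' ∧ ((j.val + 1) % 6 = j'.val ∨ (j'.val + 1) % 6 = j.val)
  | _, _ => False

def rsGraph (p : ℕ) (tO hO : Fin 4 → Fin 4) : LabGraph p where
  V := RSV
  fintypeV := inferInstance
  decEqV := inferInstance
  adj := rsAdj tO hO
  symm {u v} h := by
    rcases u with a | ⟨t, i⟩ | ⟨s, j⟩ <;> rcases v with b | ⟨t', i'⟩ | ⟨s', j'⟩ <;>
      simp only [rsAdj] at h ⊢ <;> tauto
  irrefl u h := by
    rcases u with a | ⟨t, i⟩ | ⟨s, j⟩ <;> simp only [rsAdj] at h <;> omega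
  lab _ _ := False

/-- `G`: triangles attached to `u₁` (index 0) and `u₄` (index 3), hexagons to
`u₂` (index 1) and `u₃` (index 2). -/
def rsG (p : ℕ) : LabGraph p :=
  rsGraph p (fun t => if t.val < 2 then 0 else 3) (fun s => if s.val < 2 then 1 else 2)

/-- `G'`: triangles attached to the opposite corners `u₁` (index 0) and `u₃`
(index 2), hexagons to `u₂` (index 1) and `u₄` (index 3). -/
def rsG' (p : ℕ) : LabGraph p :=
  rsGraph p (fun t => if t.val < 2 then 0 else 2) (fun s => if s.val < 2 then 1 else 3)
/-! ### LabGraph-level separation by node classifiers -/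

/-- `G ≡_{GNN} G'`: for every GNN node classifier, the multisets of classifier
values over all nodes coincide. -/
noncomputable def gnnGraphEquiv (p : ℕ) (G G' : LabGraph p) : Prop :=
  ∀ A : GNN p 1, Finset.univ.val.map (A.cls G) = Finset.univ.val.map (A.cls G')

/-- `G ≡_{HE-GNN-(d)} G'`: for every HE-GNN node classifier of nesting depth
`d`, the multisets of classifier values over all nodes coincide. -/
noncomputable def hegnnGraphEquiv (p d : ℕ) (G G' : LabGraph p) : Prop :=
  ∀ A : HEGNN d p 1, Finset.univ.val.map (A.cls G) = Finset.univ.val.map (A.cls G')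

/-- The eccentricity of `u` in `G`: the maximal distance from `u` to any node. -/
noncomputable def LabGraph.eccFrom {p : ℕ} (G : LabGraph p) (u : G.V) : ℕ :=
  Finset.univ.sup (fun w => sInf {r | G.within u r w})

/-! ### Auxiliary development for the proof -/

namespace GNNHom

open SimpleGraph

variable {p : ℕ}

/-- The simple graph underlying a `LabGraph`. -/
abbrev SG (F : LabGraph p) : SimpleGraph F.V where
  Adj := F.adj
  symm := ⟨fun _ _ h => F.symm h⟩
  loopless := ⟨F.irrefl⟩

lemma reachable_of_within {F : LabGraph p} {u : F.V} :
    ∀ {r : ℕ} {w : F.V}, F.within u r w → (SG F).Reachable u w := by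
  intro r
  induction r with
  | zero => intro w hw; cases hw; exact Reachable.refl _
  | succ r ih =>
    intro w hw
    rcases hw with hw | ⟨x, hx, hadj⟩
    · exact ih hw
    · exact (ih hx).trans (Adj.reachable hadj)

lemma reachable_of_rooted {F : LabGraph p} {u : F.V} (h : F.Rooted u) (w : F.V) :
    (SG F).Reachable u w := by
  obtain ⟨r, hr⟩ := h w
  exact reachable_of_within hr

lemma support_get_eq_getVert {F : LabGraph p} {a b : F.V} (q : (SG F).Walk a b) :
    ∀ (i : ℕ) (hi : i ≤ q.length),
      q.support.get ⟨i, by simp [SimpleGraph.Walk.length_support]; omega⟩ = q.getVert i := by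
  induction q with
  | nil => intro i hi; cases Nat.le_zero.mp hi; rfl
  | cons h q ih =>
    intro i hi
    cases i with
    | zero => rfl
    | succ i =>
      simp only [SimpleGraph.Walk.support_cons, SimpleGraph.Walk.getVert_cons_succ]
      exact ih i (by simpa using hi)

/-- In a cycle walk, `getVert` is injective on `[0, length)`. -/
lemma cycle_getVert_inj {F : LabGraph p} {a : F.V} {c : (SG F).Walk a a} (hc : c.IsCycle)
    {i j : ℕ} (hi : i < c.length) (hj : j < c.length)
    (hij : c.getVert i = c.getVert j) : i = j := by
  have hnd : c.support.tail.Nodup := hc.support_nodup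
  have hlen : c.support.length = c.length + 1 := SimpleGraph.Walk.length_support c
  have htl : c.support.tail.length = c.length := by
    simp [List.length_tail, hlen]
  -- tail.get k = getVert (k+1)
  have hget : ∀ (k : ℕ) (hk : k < c.length),
      c.support.tail.get ⟨k, by omega⟩ = c.getVert (k + 1) := by
    intro k hk
    have : c.support.tail.get ⟨k, by omega⟩ = c.support.get ⟨k + 1, by omega⟩ := by
      rw [List.get_tail]
    rw [this, support_get_eq_getVert c (k+1) (by omega)]
  have inj1 : ∀ {i' j' : ℕ}, i' ≤ c.length → j' ≤ c.length → 1 ≤ i' → 1 ≤ j' →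
      c.getVert i' = c.getVert j' → i' = j' := by
    intro i' j' hi' hj' h1i h1j hv
    have := List.Nodup.get_inj_iff hnd
      (i := ⟨i' - 1, by omega⟩) (j := ⟨j' - 1, by omega⟩)
    rw [hget (i'-1) (by omega), hget (j'-1) (by omega)] at this
    have h2 : i' - 1 + 1 = i' := by omega
    have h3 : j' - 1 + 1 = j' := by omega
    rw [h2, h3] at this
    have heq := this.mp hv
    have : i' - 1 = j' - 1 := congrArg Fin.val heq
    omega
  rcases Nat.eq_zero_or_pos i with hi0 | hip
  · rcases Nat.eq_zero_or_pos j with hj0 | hjp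
    · omega
    · subst hi0
      exfalso
      have h0 : c.getVert 0 = c.getVert c.length := by
        rw [SimpleGraph.Walk.getVert_zero, SimpleGraph.Walk.getVert_length]
      have : j = c.length := inj1 (by omega) le_rfl hjp (by have := hc.three_le_length; omega)
        (by rw [← hij, h0])
      omega
  · rcases Nat.eq_zero_or_pos j with hj0 | hjp
    · subst hj0
      exfalso
      have h0 : c.getVert 0 = c.getVert c.length := by
        rw [SimpleGraph.Walk.getVert_zero, SimpleGraph.Walk.getVert_length]
      have : i = c.length := inj1 (by omega) le_rfl hip (by have := hc.three_le_length; omega)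
        (by rw [hij, h0])
      omega
    · exact inj1 (by omega) (by omega) hip hjp hij

/-- `LabGraph.Acyclic` implies the underlying simple graph is acyclic. -/
lemma isAcyclic_of_acyclic {F : LabGraph p} (h : F.Acyclic) : (SG F).IsAcyclic := by
  intro a c hc
  apply h
  refine ⟨c.length, fun i => c.getVert i.val, hc.three_le_length, ?_, fun _ => trivial, ?_⟩
  · intro i j hij
    exact Fin.ext (cycle_getVert_inj hc i.isLt j.isLt hij)
  · intro i
    have hmod : ((i.val + 1) % c.length : ℕ) = if i.val + 1 = c.length then 0 else i.val + 1 := by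
      by_cases h : i.val + 1 = c.length
      · simp [h, Nat.mod_self]
      · simp [h]; exact Nat.mod_eq_of_lt (by omega)
    by_cases hlast : i.val + 1 = c.length
    · have : c.getVert (i.val + 1) = c.getVert 0 := by
        rw [hlast, SimpleGraph.Walk.getVert_length, SimpleGraph.Walk.getVert_zero]
      have hadj := c.adj_getVert_succ (i := i.val) (by omega)
      rw [this] at hadj
      simpa [hmod, hlast] using hadj
    · have hadj := c.adj_getVert_succ (i := i.val) (by omega)
      simpa [hmod, hlast] using hadj

end GNNHom
namespace GNNHom

variable {p : ℕ}

lemma within_mono {F : LabGraph p} {u w : F.V} {r r' : ℕ} (h : F.within u r w) (hr : r ≤ r') :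
    F.within u r' w := by
  induction hr with
  | refl => exact h
  | step _ ih => exact Or.inl ih

lemma exists_walk_of_within {F : LabGraph p} {u : F.V} :
    ∀ {r : ℕ} {w : F.V}, F.within u r w → ∃ W : (SG F).Walk u w, W.length ≤ r := by
  intro r
  induction r with
  | zero => intro w hw; cases hw; exact ⟨.nil, by simp⟩
  | succ r ih =>
    intro w hw
    rcases hw with hw | ⟨x, hx, hadj⟩
    · obtain ⟨W, hW⟩ := ih hw
      exact ⟨W, by omega⟩
    · obtain ⟨W, hW⟩ := ih hx
      exact ⟨W.concat hadj, by rw [SimpleGraph.Walk.length_concat]; omega⟩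

lemma within_of_walk {F : LabGraph p} {u : F.V} {w : F.V} (W : (SG F).Walk u w) :
    F.within u W.length w := by
  generalize hn : W.length = n
  induction n generalizing w W with
  | zero =>
    cases (SimpleGraph.Walk.eq_of_length_eq_zero hn)
    exact F.within_self u 0
  | succ n ih =>
    have hR : W.reverse.length = n + 1 := by simp [hn]
    cases hRW : W.reverse with
    | nil => rw [hRW] at hR; simp at hR
    | cons hadj Q =>
      rename_i x
      have hWe : W = Q.reverse.concat ((SG F).adj_symm hadj) := by
        have h2 := congrArg SimpleGraph.Walk.reverse hRW
        rw [SimpleGraph.Walk.reverse_reverse] at h2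
        rw [h2, SimpleGraph.Walk.reverse_cons]
        exact (SimpleGraph.Walk.concat_eq_append _ _).symm
      have hQ : Q.reverse.length = n := by
        have h3 := congrArg SimpleGraph.Walk.length hWe
        rw [SimpleGraph.Walk.length_concat, hn] at h3
        omega
      exact Or.inr ⟨x, ih Q.reverse hQ, (SG F).adj_symm hadj⟩

lemma isPath_concat {F : LabGraph p} {a b c : F.V} {P : (SG F).Walk a b}
    (hP : P.IsPath) (h : (SG F).Adj b c) (hc : c ∉ P.support) : (P.concat h).IsPath := by
  have h1 : (P.concat h).reverse = SimpleGraph.Walk.cons ((SG F).adj_symm h) P.reverse :=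
    SimpleGraph.Walk.reverse_concat P h
  have h2 : (SimpleGraph.Walk.cons ((SG F).adj_symm h) P.reverse).IsPath :=
    hP.reverse.cons (by simpa using hc)
  have := h2.reverse
  rwa [← h1, SimpleGraph.Walk.reverse_reverse] at this

/-- Depth of a node below the root `u`. -/
noncomputable def dep (F : LabGraph p) (u : F.V) (w : F.V) : ℕ :=
  sInf {r | F.within u r w}

/-- The parent of a node (junk at the root). -/
noncomputable def par (F : LabGraph p) (u : F.V) (w : F.V) : F.V :=
  haveI : Nonempty F.V := ⟨u⟩
  Classical.epsilon (fun x => F.adj x w ∧ dep F u x + 1 = dep F u w)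

section TreeStructure

variable {F : LabGraph p} {u : F.V} (hroot : F.Rooted u) (hacyc : F.Acyclic)

lemma dep_le_of_within {w : F.V} {r : ℕ} (h : F.within u r w) : dep F u w ≤ r :=
  Nat.sInf_le h

@[simp] lemma dep_root : dep F u u = 0 :=
  Nat.le_zero.mp (dep_le_of_within (F.within_self u 0))

include hroot

lemma within_dep (w : F.V) : F.within u (dep F u w) w :=
  Nat.sInf_mem (hroot w)

lemma eq_root_of_dep_eq_zero {w : F.V} (h : dep F u w = 0) : w = u := by
  have h2 := within_dep hroot w
  rw [h] at h2
  exact h2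

lemma dep_le_succ_of_adj {x w : F.V} (h : F.adj x w) : dep F u w ≤ dep F u x + 1 :=
  dep_le_of_within (Or.inr ⟨x, within_dep hroot x, h⟩)

include hacyc in
/-- The unique path from the root has length equal to the depth. -/
lemma path_length_eq_dep {w : F.V} (P : (SG F).Path u w) : P.1.length = dep F u w := by
  obtain ⟨W, hW⟩ := exists_walk_of_within (within_dep hroot w)
  have hbp : (⟨W.bypass, W.bypass_isPath⟩ : (SG F).Path u w) = P :=
    (SimpleGraph.isAcyclic_iff_path_unique.mp (isAcyclic_of_acyclic hacyc)) _ P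
  have h1 : P.1.length ≤ dep F u w := by
    rw [← hbp]
    exact le_trans (SimpleGraph.Walk.length_bypass_le W) hW
  have h2 : dep F u w ≤ P.1.length := dep_le_of_within (within_of_walk P.1)
  omega

/-- A path from the root to any node. -/
noncomputable def rootPath (w : F.V) : (SG F).Path u w :=
  ⟨((exists_walk_of_within (within_dep hroot w)).choose).bypass,
    SimpleGraph.Walk.bypass_isPath _⟩

include hacyc in
lemma dep_lt_of_mem_support {x w : F.V} {P : (SG F).Path u x}
    (hmem : w ∈ P.1.support) (hne : w ≠ x) : dep F u w < dep F u x := by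
  have hspec := P.1.take_spec hmem
  have hlen := congrArg SimpleGraph.Walk.length hspec
  rw [SimpleGraph.Walk.length_append] at hlen
  have hd1 : dep F u w ≤ (P.1.takeUntil w hmem).length :=
    dep_le_of_within (within_of_walk _)
  have hd2 : (P.1.dropUntil w hmem).length ≠ 0 := by
    intro h0
    exact hne (SimpleGraph.Walk.eq_of_length_eq_zero h0)
  have := path_length_eq_dep hroot hacyc P
  omega

include hacyc in
lemma dep_ne_of_adj {x w : F.V} (h : F.adj x w) : dep F u x ≠ dep F u w := by
  intro heq
  have hxw : x ≠ w := fun he => F.irrefl w (he ▸ h)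
  have hP := rootPath hroot (u := u) x
  have hnm : w ∉ hP.1.support := by
    intro hmem
    have := dep_lt_of_mem_support hroot hacyc hmem (Ne.symm hxw)
    omega
  have hl1 := path_length_eq_dep hroot hacyc hP
  have hl2 := path_length_eq_dep hroot hacyc
    (⟨hP.1.concat h, isPath_concat hP.2 h hnm⟩ : (SG F).Path u w)
  simp only [SimpleGraph.Walk.length_concat] at hl2
  omega

lemma parent_exists {w : F.V} (hw : w ≠ u) :
    ∃ x, F.adj x w ∧ dep F u x + 1 = dep F u w := by
  have hpos : dep F u w ≠ 0 := fun h => hw (eq_root_of_dep_eq_zero hroot h)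
  obtain ⟨k, hk⟩ : ∃ k, dep F u w = k + 1 := ⟨dep F u w - 1, by omega⟩
  have hwd := within_dep hroot w
  rw [hk] at hwd
  rcases hwd with hwd | ⟨x, hx, hadj⟩
  · have := dep_le_of_within hwd
    omega
  · have h1 : dep F u x ≤ k := dep_le_of_within hx
    have h2 : dep F u w ≤ dep F u x + 1 := dep_le_succ_of_adj hroot hadj
    exact ⟨x, hadj, by omega⟩

include hacyc in
lemma parent_unique {x y w : F.V} (hx : F.adj x w) (hy : F.adj y w)
    (hdx : dep F u x + 1 = dep F u w) (hdy : dep F u y + 1 = dep F u w) : x = y := by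
  by_contra hne
  have hxw : x ≠ w := fun he => F.irrefl w (he ▸ hx)
  have hyw : y ≠ w := fun he => F.irrefl w (he ▸ hy)
  have hPx := rootPath hroot (u := u) x
  have hPy := rootPath hroot (u := u) y
  have hnmx : w ∉ hPx.1.support := fun hmem => by
    have := dep_lt_of_mem_support hroot hacyc hmem (Ne.symm hxw); omega
  have hnmy : w ∉ hPy.1.support := fun hmem => by
    have := dep_lt_of_mem_support hroot hacyc hmem (Ne.symm hyw); omega
  have heq : (⟨hPx.1.concat hx, isPath_concat hPx.2 hx hnmx⟩ : (SG F).Path u w) =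
      ⟨hPy.1.concat hy, isPath_concat hPy.2 hy hnmy⟩ :=
    (SimpleGraph.isAcyclic_iff_path_unique.mp (isAcyclic_of_acyclic hacyc)) _ _
  have hwalks : hPx.1.concat hx = hPy.1.concat hy := congrArg Subtype.val heq
  have hgv : (hPx.1.concat hx).getVert (hPx.1.length) = x := by
    rw [SimpleGraph.Walk.concat_eq_append, SimpleGraph.Walk.getVert_append]
    simp
  have hgv2 : (hPy.1.concat hy).getVert (hPy.1.length) = y := by
    rw [SimpleGraph.Walk.concat_eq_append, SimpleGraph.Walk.getVert_append]
    simp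
  have hlx := path_length_eq_dep hroot hacyc hPx
  have hly := path_length_eq_dep hroot hacyc hPy
  have hll : hPx.1.length = hPy.1.length := by omega
  rw [hwalks, hll, hgv2] at hgv
  exact hne hgv.symm

lemma par_spec {w : F.V} (hw : w ≠ u) :
    F.adj (par F u w) w ∧ dep F u (par F u w) + 1 = dep F u w := by
  haveI : Nonempty F.V := ⟨u⟩
  exact Classical.epsilon_spec (parent_exists hroot hw)

include hacyc in
lemma par_eq {x w : F.V} (hw : w ≠ u) (h : F.adj x w)
    (hd : dep F u x + 1 = dep F u w) : par F u w = x := by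
  obtain ⟨h1, h2⟩ := par_spec hroot hw
  exact parent_unique hroot hacyc h1 h h2 hd

include hacyc in
/-- Characterization of the edges of a rooted acyclic graph. -/
lemma adj_iff_par {a b : F.V} :
    F.adj a b ↔ (a ≠ u ∧ par F u a = b) ∨ (b ≠ u ∧ par F u b = a) := by
  constructor
  · intro h
    have hne := dep_ne_of_adj hroot hacyc h
    rcases Nat.lt_or_ge (dep F u a) (dep F u b) with hlt | hge
    · have hd : dep F u a + 1 = dep F u b := by
        have := dep_le_succ_of_adj hroot h
        omega
      have hb : b ≠ u := by
        intro he; rw [he] at hd; simp at hd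
      exact Or.inr ⟨hb, par_eq hroot hacyc hb h hd⟩
    · have hd : dep F u b + 1 = dep F u a := by
        have := dep_le_succ_of_adj hroot (F.symm h)
        omega
      have ha : a ≠ u := by
        intro he; rw [he] at hd; simp at hd
      exact Or.inl ⟨ha, par_eq hroot hacyc ha (F.symm h) hd⟩
  · rintro (⟨ha, hp⟩ | ⟨hb, hp⟩)
    · exact F.symm (hp ▸ (par_spec hroot ha).1)
    · exact hp ▸ (par_spec hroot hb).1

lemma adj_par {w : F.V} (hw : w ≠ u) : F.adj (par F u w) w := (par_spec hroot hw).1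

lemma dep_par {w : F.V} (hw : w ≠ u) : dep F u (par F u w) + 1 = dep F u w :=
  (par_spec hroot hw).2

end TreeStructure

end GNNHom
namespace GNNHom

variable {p : ℕ}

/-- Descendant relation determined by the parent map. -/
def descP (F : LabGraph p) (u : F.V) (w x : F.V) : Prop :=
  ∃ k, dep F u x = dep F u w + k ∧ (par F u)^[k] x = w

/-- The children of a node. -/
noncomputable def childrenF (F : LabGraph p) (u w : F.V) : Finset F.V :=
  Finset.univ.filter (fun c => c ≠ u ∧ par F u c = w)

lemma mem_childrenF {F : LabGraph p} {u w c : F.V} :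
    c ∈ childrenF F u w ↔ c ≠ u ∧ par F u c = w := by
  simp [childrenF]

lemma descP_self (F : LabGraph p) (u w : F.V) : descP F u w w := ⟨0, by simp, rfl⟩

section Desc

variable {F : LabGraph p} {u : F.V} (hroot : F.Rooted u) (hacyc : F.Acyclic)

include hroot hacyc

lemma iter_dep {k : ℕ} {x w : F.V} (hit : (par F u)^[k] x = w)
    (hd : dep F u x = dep F u w + k) :
    ∀ j, j ≤ k → dep F u ((par F u)^[j] x) + j = dep F u x ∧
      (par F u)^[k - j] ((par F u)^[j] x) = w := by
  intro j
  induction j with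
  | zero => intro _; exact ⟨by simp, hit⟩
  | succ j ih =>
    intro hj
    obtain ⟨hdj, hitj⟩ := ih (by omega)
    have hyne : (par F u)^[j] x ≠ u := by
      intro he
      rw [he, dep_root] at hdj
      omega
    have hpy := dep_par hroot hyne
    refine ⟨?_, ?_⟩
    · rw [Function.iterate_succ_apply']
      omega
    · have hkj : k - j = (k - (j + 1)) + 1 := by omega
      rw [hkj, Function.iterate_succ_apply] at hitj
      rw [Function.iterate_succ_apply']
      exact hitj

lemma par_iter_root : ∀ (n : ℕ) (x : F.V), dep F u x = n → (par F u)^[n] x = u := by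
  intro n
  induction n with
  | zero => intro x hx; exact eq_root_of_dep_eq_zero hroot hx
  | succ n ih =>
    intro x hx
    have hxu : x ≠ u := by
      intro he; rw [he, dep_root] at hx; omega
    have hp := dep_par hroot hxu
    rw [Function.iterate_succ_apply]
    exact ih _ (by omega)

lemma descP_root (x : F.V) : descP F u u x :=
  ⟨dep F u x, by simp, par_iter_root hroot hacyc _ _ rfl⟩

lemma desc_ne_root {w x : F.V} (h : descP F u w x) (hx : x ≠ w) : x ≠ u := by
  obtain ⟨k, hd, hit⟩ := h
  have hk : k ≠ 0 := by
    intro h0; rw [h0] at hit; exact hx hit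
  intro he
  rw [he, dep_root] at hd
  omega

lemma desc_par {w x : F.V} (h : descP F u w x) (hx : x ≠ w) : descP F u w (par F u x) := by
  obtain ⟨k, hd, hit⟩ := h
  have hk : k ≠ 0 := by
    intro h0; rw [h0] at hit; exact hx hit
  have hxu : x ≠ u := desc_ne_root hroot hacyc ⟨k, hd, hit⟩ hx
  have hp := dep_par hroot hxu
  refine ⟨k - 1, by omega, ?_⟩
  have hkk : k = (k - 1) + 1 := by omega
  rw [hkk, Function.iterate_succ_apply] at hit
  exact hit

lemma desc_iter_eq {w x : F.V} (h : descP F u w x) :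
    dep F u w ≤ dep F u x ∧ (par F u)^[dep F u x - dep F u w] x = w := by
  obtain ⟨k, hd, hit⟩ := h
  have : dep F u x - dep F u w = k := by omega
  rw [this]
  exact ⟨by omega, hit⟩

lemma dep_of_mem_childrenF {w c : F.V} (hc : c ∈ childrenF F u w) :
    dep F u c = dep F u w + 1 := by
  obtain ⟨hcu, hcp⟩ := mem_childrenF.mp hc
  have := dep_par hroot hcu
  rw [hcp] at this
  omega

lemma child_desc {w c : F.V} (hc : c ∈ childrenF F u w) : descP F u w c :=
  ⟨1, by rw [dep_of_mem_childrenF hroot hacyc hc], by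
    simpa using (mem_childrenF.mp hc).2⟩

lemma child_ne {w c : F.V} (hc : c ∈ childrenF F u w) : c ≠ w := by
  intro he
  have := dep_of_mem_childrenF hroot hacyc hc
  rw [he] at this
  omega

lemma desc_of_child {w c x : F.V} (hc : c ∈ childrenF F u w) (h : descP F u c x) :
    descP F u w x := by
  obtain ⟨k, hd, hit⟩ := h
  have hdc := dep_of_mem_childrenF hroot hacyc hc
  refine ⟨k + 1, by omega, ?_⟩
  rw [Function.iterate_succ_apply', hit]
  exact (mem_childrenF.mp hc).2

lemma not_desc_child {w c : F.V} (hc : c ∈ childrenF F u w) : ¬ descP F u c w := by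
  rintro ⟨k, hd, -⟩
  have := dep_of_mem_childrenF hroot hacyc hc
  omega

lemma desc_eq_of_dep_eq {c x : F.V} (h : descP F u c x) (hd : dep F u x = dep F u c) :
    x = c := by
  obtain ⟨k, hk, hit⟩ := h
  have : k = 0 := by omega
  rw [this] at hit
  exact hit

lemma childOf_exists {w x : F.V} (h : descP F u w x) (hx : x ≠ w) :
    ∃ c, c ∈ childrenF F u w ∧ descP F u c x := by
  obtain ⟨k, hd, hit⟩ := h
  have hk : k ≠ 0 := by
    intro h0; rw [h0] at hit; exact hx hit
  obtain ⟨hdj, hit1⟩ := iter_dep hroot hacyc hit hd (k - 1) (by omega)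
  have hkk : k - (k - 1) = 1 := by omega
  rw [hkk] at hit1
  simp only [Function.iterate_one] at hit1
  set c := (par F u)^[k - 1] x with hc
  have hdc : dep F u c + (k - 1) = dep F u x := hdj
  have hcu : c ≠ u := by
    intro he
    rw [he, dep_root] at hdc
    omega
  refine ⟨c, mem_childrenF.mpr ⟨hcu, hit1⟩, ⟨k - 1, by omega, rfl⟩⟩

lemma childOf_unique {w c c' x : F.V} (hc : c ∈ childrenF F u w) (hc' : c' ∈ childrenF F u w)
    (h : descP F u c x) (h' : descP F u c' x) : c = c' := by
  obtain ⟨h1, h2⟩ := desc_iter_eq hroot hacyc h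
  obtain ⟨h1', h2'⟩ := desc_iter_eq hroot hacyc h'
  have e1 := dep_of_mem_childrenF hroot hacyc hc
  have e2 := dep_of_mem_childrenF hroot hacyc hc'
  rw [← h2, ← h2', e1, e2]

lemma par_ne_parent {w c x : F.V} (hc : c ∈ childrenF F u w) (h : descP F u c x)
    (hxc : x ≠ c) : par F u x ≠ w ∧ descP F u c (par F u x) := by
  have hdesc := desc_par hroot hacyc h hxc
  obtain ⟨k, hk, hit⟩ := h
  have hk0 : k ≠ 0 := by
    intro h0; rw [h0] at hit; exact hxc hit
  have hxu : x ≠ u := desc_ne_root hroot hacyc ⟨k, hk, hit⟩ hxc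
  have hp := dep_par hroot hxu
  have e1 := dep_of_mem_childrenF hroot hacyc hc
  constructor
  · intro he
    have : dep F u (par F u x) = dep F u w := by rw [he]
    omega
  · exact hdesc

end Desc

end GNNHom
namespace GNNHom

variable {p : ℕ}

lemma mem_nbrFinset {G : LabGraph p} {v x : G.V} : x ∈ G.nbrFinset v ↔ G.adj v x := by
  simp [LabGraph.nbrFinset]

/-- Partial homomorphisms defined on the subtree below `w`, pinned to `v` elsewhere. -/
def HomT (F : LabGraph p) (u : F.V) (G : LabGraph p) (w : F.V) (v : G.V) : Type :=
  {h : F.V → G.V // h w = v ∧ (∀ x, descP F u w x → ∀ j, F.lab x j → G.lab (h x) j) ∧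
    (∀ x, descP F u w x → x ≠ w → G.adj (h (par F u x)) (h x)) ∧
    ∀ x, ¬ descP F u w x → h x = v}

instance {F : LabGraph p} {u : F.V} {G : LabGraph p} {w : F.V} {v : G.V} :
    Finite (HomT F u G w v) := by
  unfold HomT
  infer_instance

/-- The number of partial homomorphisms from the subtree below `w` sending `w` to `v`. -/
noncomputable def subCnt (F : LabGraph p) (u : F.V) (G : LabGraph p) (w : F.V) (v : G.V) : ℕ :=
  Nat.card (HomT F u G w v)

section Counting

variable {F : LabGraph p} {u : F.V} (hroot : F.Rooted u) (hacyc : F.Acyclic)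

include hroot hacyc

lemma subCnt_root (G : LabGraph p) (v : G.V) : subCnt F u G u v = homCount F G u v := by
  rw [subCnt, homCount]
  apply Nat.card_congr
  apply Equiv.subtypeEquivRight
  intro h
  constructor
  · rintro ⟨h1, h2, h3, -⟩
    refine ⟨h1, ?_, fun w i hi => h2 w (descP_root hroot hacyc w) i hi⟩
    intro a b hab
    rcases (adj_iff_par hroot hacyc).mp hab with ⟨ha, hp⟩ | ⟨hb, hp⟩
    · have := h3 a (descP_root hroot hacyc a) ha
      rw [hp] at this
      exact G.symm this
    · have := h3 b (descP_root hroot hacyc b) hb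
      rw [hp] at this
      exact this
  · rintro ⟨h1, h2, h3⟩
    refine ⟨h1, fun x _ j hj => h3 x j hj, ?_, ?_⟩
    · intro x _ hx
      exact h2 (adj_par hroot hx)
    · intro x hx
      exact absurd (descP_root hroot hacyc x) hx

/-- Restriction of a partial homomorphism to the subtree below a child. -/
noncomputable def Phi (G : LabGraph p) (w : F.V) (v : G.V) (h : HomT F u G w v)
    (c : {c // c ∈ childrenF F u w}) :
    Σ v' : {v' // v' ∈ G.nbrFinset v}, HomT F u G c.1 v'.1 := by
  refine ⟨⟨h.1 c.1, ?_⟩, ⟨fun x => if descP F u c.1 x then h.1 x else h.1 c.1, ?_, ?_, ?_, ?_⟩⟩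
  · rw [mem_nbrFinset]
    have hadj := h.2.2.2.1 c.1 (child_desc hroot hacyc c.2) (child_ne hroot hacyc c.2)
    rw [(mem_childrenF.mp c.2).2, h.2.1] at hadj
    exact hadj
  · simp [descP_self]
  · intro x hx j hj
    simp only [if_pos hx]
    exact h.2.2.1 x (desc_of_child hroot hacyc c.2 hx) j hj
  · intro x hx hxc
    have hpdesc := desc_par hroot hacyc hx hxc
    simp only [if_pos hx, if_pos hpdesc]
    have hxw : x ≠ w := by
      intro he
      exact not_desc_child hroot hacyc c.2 (he ▸ hx)
    exact h.2.2.2.1 x (desc_of_child hroot hacyc c.2 hx) hxw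
  · intro x hx
    simp only [if_neg hx]

lemma sig_ext {G : LabGraph p} {c : F.V} {v : G.V}
    {s t : Σ v' : {v' // v' ∈ G.nbrFinset v}, HomT F u G c v'.1} (h : s.2.1 = t.2.1) :
    s = t := by
  obtain ⟨⟨v1, m1⟩, h1⟩ := s
  obtain ⟨⟨v2, m2⟩, h2⟩ := t
  simp only at h
  have hv : v1 = v2 := by
    have e1 : h1.1 c = v1 := h1.2.1
    have e2 : h2.1 c = v2 := h2.2.1
    rw [← e1, ← e2, h]
  subst hv
  refine Sigma.ext rfl ?_
  exact heq_of_eq (Subtype.ext h)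

lemma Phi_bijective (G : LabGraph p) (w : F.V) (v : G.V)
    (hlab : ∀ j, F.lab w j → G.lab v j) :
    Function.Bijective (Phi hroot hacyc G w v) := by
  classical
  constructor
  · intro h h' he
    apply Subtype.ext
    funext x
    by_cases hx : descP F u w x
    · by_cases hxw : x = w
      · subst hxw
        rw [h.2.1, h'.2.1]
      · obtain ⟨c, hc, hcx⟩ := childOf_exists hroot hacyc hx hxw
        have h1 := congrFun he ⟨c, hc⟩
        have h2 := congrArg (fun s : Σ v' : {v' // v' ∈ G.nbrFinset v},
          HomT F u G c v'.1 => s.2.1) h1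
        have h3 := congrFun h2 x
        simpa [Phi, if_pos hcx] using h3
    · rw [h.2.2.2.2 x hx, h'.2.2.2.2 x hx]
  · intro f
    have hch : ∀ x, descP F u w x → x ≠ w → ∃ c, c ∈ childrenF F u w ∧ descP F u c x :=
      fun x h1 h2 => childOf_exists hroot hacyc h1 h2
    set h₀ : F.V → G.V := fun x =>
      if hx : descP F u w x then
        (if hxw : x = w then v else
          (f ⟨(hch x hx hxw).choose, (hch x hx hxw).choose_spec.1⟩).2.1 x)
      else v with hh₀
    have hval : ∀ x (hx : descP F u w x) (hxw : x ≠ w) (c : F.V) (hc : c ∈ childrenF F u w)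
        (hcx : descP F u c x), h₀ x = (f ⟨c, hc⟩).2.1 x := by
      intro x hx hxw c hc hcx
      have hcc : (hch x hx hxw).choose = c :=
        childOf_unique hroot hacyc (hch x hx hxw).choose_spec.1 hc
          (hch x hx hxw).choose_spec.2 hcx
      have hsub : (⟨(hch x hx hxw).choose, (hch x hx hxw).choose_spec.1⟩ :
          {c // c ∈ childrenF F u w}) = ⟨c, hc⟩ := Subtype.ext hcc
      rw [hh₀]
      simp only [dif_pos hx, dif_neg hxw]
      exact congrFun (congrArg (fun s => (f s).2.1) hsub) x
    have h₀w : h₀ w = v := by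
      rw [hh₀]
      simp [descP_self]
    have hpin : ∀ x, ¬ descP F u w x → h₀ x = v := by
      intro x hx
      rw [hh₀]
      simp [hx]
    have hlabs : ∀ x, descP F u w x → ∀ j, F.lab x j → G.lab (h₀ x) j := by
      intro x hx j hj
      by_cases hxw : x = w
      · subst hxw
        rw [h₀w]
        exact hlab j hj
      · obtain ⟨c, hc, hcx⟩ := hch x hx hxw
        rw [hval x hx hxw c hc hcx]
        exact (f ⟨c, hc⟩).2.2.2.1 x hcx j hj
    have hedge : ∀ x, descP F u w x → x ≠ w → G.adj (h₀ (par F u x)) (h₀ x) := by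
      intro x hx hxw
      obtain ⟨c, hc, hcx⟩ := hch x hx hxw
      have hx' := hval x hx hxw c hc hcx
      by_cases hxc : x = c
      · subst hxc
        rw [(mem_childrenF.mp hc).2, h₀w, hx', (f ⟨x, hc⟩).2.2.1]
        exact mem_nbrFinset.mp (f ⟨x, hc⟩).1.2
      · obtain ⟨hpw, hpdesc⟩ := par_ne_parent hroot hacyc hc hcx hxc
        have hpx : descP F u w (par F u x) := desc_of_child hroot hacyc hc hpdesc
        have hp' := hval (par F u x) hpx hpw c hc hpdesc
        rw [hp', hx']
        exact (f ⟨c, hc⟩).2.2.2.2.1 x hcx hxc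
    refine ⟨⟨h₀, h₀w, hlabs, hedge, hpin⟩, ?_⟩
    funext c
    apply sig_ext hroot hacyc
    show (fun x => if descP F u c.1 x then h₀ x else h₀ c.1) = (f c).2.1
    have hc' : (⟨c.1, c.2⟩ : {c // c ∈ childrenF F u w}) = c := rfl
    funext x
    by_cases hx : descP F u c.1 x
    · rw [if_pos hx]
      have hxw : x ≠ w := by
        intro he
        exact not_desc_child hroot hacyc c.2 (he ▸ hx)
      rw [hval x (desc_of_child hroot hacyc c.2 hx) hxw c.1 c.2 hx, hc']
    · rw [if_neg hx]
      have h1 : h₀ c.1 = (f c).2.1 c.1 := by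
        rw [hval c.1 (child_desc hroot hacyc c.2) (child_ne hroot hacyc c.2) c.1 c.2
          (descP_self F u c.1), hc']
      rw [h1, (f c).2.2.1, ((f c).2.2.2.2.2 x hx)]

/-- The recursion formula for subtree homomorphism counts. -/
lemma subCnt_rec (G : LabGraph p) (w : F.V) (v : G.V) :
    subCnt F u G w v =
      if ∀ j, F.lab w j → G.lab v j then
        ∏ c ∈ childrenF F u w, ∑ v' ∈ G.nbrFinset v, subCnt F u G c v'
      else 0 := by
  classical
  by_cases hlab : ∀ j, F.lab w j → G.lab v j
  · rw [if_pos hlab]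
    have hcard := Nat.card_eq_of_bijective _ (Phi_bijective hroot hacyc G w v hlab)
    rw [subCnt, hcard, Nat.card_pi]
    have hsig : ∀ c : F.V, Nat.card (Σ v' : {v' // v' ∈ G.nbrFinset v}, HomT F u G c v'.1)
        = ∑ v' ∈ G.nbrFinset v, subCnt F u G c v' := by
      intro c
      haveI : ∀ v' : G.V, Fintype (HomT F u G c v') := fun v' => Fintype.ofFinite _
      rw [Nat.card_eq_fintype_card, Fintype.card_sigma,
        ← Finset.sum_coe_sort (G.nbrFinset v) (fun v' => subCnt F u G c v')]
      congr 1
      funext v'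
      rw [subCnt, Nat.card_eq_fintype_card]
    calc ∏ c : {c // c ∈ childrenF F u w},
          Nat.card (Σ v' : {v' // v' ∈ G.nbrFinset v}, HomT F u G c.1 v'.1)
        = ∏ c : {c // c ∈ childrenF F u w},
            ∑ v' ∈ G.nbrFinset v, subCnt F u G c.1 v' := by
          congr 1
          funext c
          exact hsig c.1
      _ = ∏ c ∈ childrenF F u w, ∑ v' ∈ G.nbrFinset v, subCnt F u G c v' :=
          Finset.prod_coe_sort (childrenF F u w)
            (fun c => ∑ v' ∈ G.nbrFinset v, subCnt F u G c v')
  · rw [if_neg hlab]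
    push_neg at hlab
    obtain ⟨j, hj, hnj⟩ := hlab
    haveI : IsEmpty (HomT F u G w v) := by
      constructor
      intro h
      exact hnj (h.2.1 ▸ h.2.2.1 w (descP_self F u w) j hj)
    rw [subCnt]
    exact Nat.card_of_isEmpty

end Counting

end GNNHom
namespace GNNHom

open Cardinal in
/-- An injection of real sequences into the reals. -/
noncomputable def encSeq : (ℕ → ℝ) ↪ ℝ := by
  have h : #(ℕ → ℝ) = #ℝ := by
    rw [← Cardinal.power_def ℝ ℕ]
    rw [Cardinal.mk_real]
    rw [Cardinal.mk_nat]
    exact Cardinal.continuum_power_aleph0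
  exact (Classical.choice (Cardinal.eq.mp h)).toEmbedding

open Cardinal in
/-- An injection of multisets of `Fin 1`-vectors into the reals. -/
noncomputable def encM : Multiset (Fin 1 → ℝ) ↪ ℝ := by
  have h : #(Multiset (Fin 1 → ℝ)) ≤ #ℝ := by
    calc #(Multiset (Fin 1 → ℝ)) ≤ #(List (Fin 1 → ℝ)) := Cardinal.mk_quotient_le
      _ = #(List ℝ) := Cardinal.mk_congr (Equiv.listEquivOfEquiv (Equiv.funUnique (Fin 1) ℝ))
      _ = #ℝ := Cardinal.mk_list_eq_mk ℝ
  exact Classical.choice ((Cardinal.le_def _ _).mp h)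

noncomputable def decM : ℝ → Multiset (Fin 1 → ℝ) := Function.invFun encM

lemma decM_encM (M : Multiset (Fin 1 → ℝ)) : decM (encM M) = M :=
  Function.leftInverse_invFun encM.injective M

lemma embG_eq_one {G : LabGraph p'} {v : G.V} {j : Fin p'} : G.embG v j = 1 ↔ G.lab v j := by
  by_cases h : G.lab v j <;> simp [LabGraph.embG, h]

section Main

variable {p m : ℕ} (F : Fin m → LabGraph p) (u : ∀ i, (F i).V)

/-- The state space carried by the intermediate embeddings. -/
def St (F : Fin m → LabGraph p) : Type := (Fin p → ℝ) × (∀ i : Fin m, (F i).V → ℕ)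

instance : Nonempty (St F) := ⟨fun _ => 0, fun _ _ => 0⟩

/-- An injection of the state space into the reals. -/
noncomputable def encS : St F ↪ ℝ := by
  have cnt : ∃ f : (∀ i : Fin m, (F i).V → ℕ) → ℕ, Function.Injective f :=
    exists_injective_nat _
  refine (Function.Embedding.trans ⟨fun s n =>
    if n = 0 then ((cnt.choose s.2 : ℕ) : ℝ)
    else (if h2 : n - 1 < p then s.1 ⟨n - 1, h2⟩ else 0), ?_⟩ encSeq)
  intro s t h
  have h0 := congrFun h 0
  simp only [if_pos rfl] at h0
  have h2 : s.2 = t.2 := cnt.choose_spec (Nat.cast_injective h0)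
  have h1 : s.1 = t.1 := by
    funext j
    have hj := congrFun h (j.1 + 1)
    simp only [Nat.succ_ne_zero, if_false, Nat.add_sub_cancel, j.2, dif_pos] at hj
    simpa using hj
  exact Prod.ext h1 h2

noncomputable def decS : ℝ → St F := Function.invFun (encS F)

lemma decS_encS (s : St F) : decS F (encS F s) = s :=
  Function.leftInverse_invFun (encS F).injective s

/-- A common bound on all depths in all the trees. -/
noncomputable def Dmax : ℕ :=
  Finset.univ.sup fun i : Fin m =>
    Finset.univ.sup fun w : (F i).V => dep (F i) (u i) w

lemma dep_le_Dmax (i : Fin m) (w : (F i).V) : dep (F i) (u i) w ≤ Dmax F u := by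
  have h1 : dep (F i) (u i) w ≤ Finset.univ.sup (fun w : (F i).V => dep (F i) (u i) w) :=
    Finset.le_sup (Finset.mem_univ w)
  have h2 : Finset.univ.sup (fun w : (F i).V => dep (F i) (u i) w) ≤ Dmax F u :=
    Finset.le_sup (f := fun i : Fin m =>
      Finset.univ.sup fun w : (F i).V => dep (F i) (u i) w) (Finset.mem_univ i)
  exact le_trans h1 h2

/-- The intended state after `k` layers. -/
noncomputable def sigSt (G : LabGraph p) (k : ℕ) (v : G.V) : St F :=
  (G.embG v, fun i w =>
    if Dmax F u < dep (F i) (u i) w + k then subCnt (F i) (u i) G w v else 0)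

/-- The state transition of one layer. -/
noncomputable def stepS (k : ℕ) (s : St F) (N : Multiset (St F)) : St F :=
  (s.1, fun i w =>
    if Dmax F u < dep (F i) (u i) w + k then
      (if ∀ j, (F i).lab w j → s.1 j = 1 then
        ∏ c ∈ childrenF (F i) (u i) w, (N.map (fun t => t.2 i c)).sum
      else 0)
    else 0)

variable (hroot : ∀ i, (F i).Rooted (u i)) (hacyc : ∀ i, (F i).Acyclic)

include hroot hacyc

lemma step_sig (G : LabGraph p) (v : G.V) (k : ℕ) :
    stepS F u (k + 1) (sigSt F u G k v) ((G.nbrFinset v).val.map (sigSt F u G k)) =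
      sigSt F u G (k + 1) v := by
  unfold stepS sigSt
  refine Prod.ext rfl ?_
  funext i w
  simp only
  by_cases hcond : Dmax F u < dep (F i) (u i) w + (k + 1)
  · rw [if_pos hcond, if_pos hcond]
    have hlabiff : (∀ j, (F i).lab w j → G.embG v j = 1) ↔ (∀ j, (F i).lab w j → G.lab v j) := by
      constructor
      · intro h j hj; exact embG_eq_one.mp (h j hj)
      · intro h j hj; exact embG_eq_one.mpr (h j hj)
    rw [subCnt_rec (hroot i) (hacyc i) G w v]
    by_cases hlab : ∀ j, (F i).lab w j → G.lab v j
    · rw [if_pos (hlabiff.mpr hlab), if_pos hlab]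
      apply Finset.prod_congr rfl
      intro c hc
      erw [Multiset.map_map]
      have hdc := dep_of_mem_childrenF (hroot i) (hacyc i) hc
      have : ∀ v' : G.V, (sigSt F u G k v').2 i c = subCnt (F i) (u i) G c v' := by
        intro v'
        simp only [sigSt]
        rw [if_pos (by omega)]
      calc ((G.nbrFinset v).val.map fun v' => (sigSt F u G k v').2 i c).sum
          = ((G.nbrFinset v).val.map fun v' => subCnt (F i) (u i) G c v').sum := by
            congr 1
            exact Multiset.map_congr rfl (fun v' _ => this v')
        _ = ∑ v' ∈ G.nbrFinset v, subCnt (F i) (u i) G c v' := rfl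
    · rw [if_neg (fun hc => hlab (hlabiff.mp hc)), if_neg hlab]
  · rw [if_neg hcond, if_neg hcond]

lemma step_one (G : LabGraph p) (v : G.V) :
    stepS F u 1 (G.embG v, fun _ _ => 0) 0 = sigSt F u G 1 v := by
  unfold stepS sigSt
  refine Prod.ext rfl ?_
  funext i w
  simp only
  by_cases hcond : Dmax F u < dep (F i) (u i) w + 1
  · rw [if_pos hcond, if_pos hcond]
    have hempty : childrenF (F i) (u i) w = ∅ := by
      by_contra hne
      obtain ⟨c, hc⟩ := Finset.nonempty_of_ne_empty hne
      have := dep_of_mem_childrenF (hroot i) (hacyc i) hc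
      have := dep_le_Dmax F u i c
      omega
    rw [subCnt_rec (hroot i) (hacyc i) G w v, hempty]
    have hlabiff : (∀ j, (F i).lab w j → G.embG v j = 1) ↔ (∀ j, (F i).lab w j → G.lab v j) := by
      constructor
      · intro h j hj; exact embG_eq_one.mp (h j hj)
      · intro h j hj; exact embG_eq_one.mpr (h j hj)
    by_cases hlab : ∀ j, (F i).lab w j → G.lab v j
    · rw [if_pos (hlabiff.mpr hlab), if_pos hlab]
      simp
    · rw [if_neg (fun hc => hlab (hlabiff.mp hc)), if_neg hlab]
  · rw [if_neg hcond, if_neg hcond]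

end Main

end GNNHom
namespace GNNHom

lemma append11_zero (a b : Fin 1 → ℝ) : Fin.append a b (0 : Fin (1 + 1)) = a 0 :=
  Fin.append_left a b 0

lemma append11_one (a b : Fin 1 → ℝ) : Fin.append a b (1 : Fin (1 + 1)) = b 0 :=
  Fin.append_right a b 0

section Layers

variable {p m : ℕ} (F : Fin m → LabGraph p) (u : ∀ i, (F i).V)

/-- The intermediate layers. -/
noncomputable def midL (k : ℕ) : GNNLayer 1 1 where
  agg := fun M => fun _ => encM M
  com := fun x => fun _ =>
    encS F (stepS F u k (decS F (x 0)) ((decM (x 1)).map (fun t => decS F (t 0))))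

/-- The final layer. -/
noncomputable def finL (k : ℕ) : GNNLayer 1 (p + m) where
  agg := fun M => fun _ => encM M
  com := fun x =>
    Fin.append
      (stepS F u k (decS F (x 0)) ((decM (x 1)).map (fun t => decS F (t 0)))).1
      (fun i =>
        ((stepS F u k (decS F (x 0)) ((decM (x 1)).map (fun t => decS F (t 0)))).2 i (u i) : ℝ))

/-- The first layer. -/
noncomputable def firstL : GNNLayer p 1 where
  agg := fun _ => fun _ => 0
  com := fun x => fun _ =>
    encS F (stepS F u 1 ((fun j => x (Fin.castAdd p j)), fun _ _ => 0) (0 : Multiset (St F)))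

variable (hroot : ∀ i, (F i).Rooted (u i)) (hacyc : ∀ i, (F i).Acyclic)

lemma com_arg (G : LabGraph p) (k k' : ℕ) (v : G.V) :
    stepS F u k
      (decS F ((Fin.append (fun _ : Fin 1 => encS F (sigSt F u G k' v))
        (fun _ : Fin 1 => encM ((G.nbrFinset v).val.map
          (fun v' => fun _ : Fin 1 => encS F (sigSt F u G k' v'))))) 0))
      ((decM ((Fin.append (fun _ : Fin 1 => encS F (sigSt F u G k' v))
        (fun _ : Fin 1 => encM ((G.nbrFinset v).val.map
          (fun v' => fun _ : Fin 1 => encS F (sigSt F u G k' v'))))) 1)).map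
        (fun t => decS F (t 0))) =
    stepS F u k (sigSt F u G k' v) ((G.nbrFinset v).val.map (sigSt F u G k')) := by
  simp only [append11_zero, append11_one, decS_encS, decM_encM, Multiset.map_map]
  congr 1
  apply Multiset.map_congr rfl
  intro v' _
  simp only [Function.comp_apply]
  rw [decS_encS]

include hroot hacyc

lemma midL_apply (G : LabGraph p) (k : ℕ) :
    (midL F u (k + 1)).apply G (fun v _ => encS F (sigSt F u G k v)) =
      fun v _ => encS F (sigSt F u G (k + 1) v) := by
  funext v j
  show encS F (stepS F u (k + 1)
      (decS F ((Fin.append (fun _ : Fin 1 => encS F (sigSt F u G k v))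
        (fun _ : Fin 1 => encM ((G.nbrFinset v).val.map
          (fun v' => fun _ : Fin 1 => encS F (sigSt F u G k v'))))) 0))
      ((decM ((Fin.append (fun _ : Fin 1 => encS F (sigSt F u G k v))
        (fun _ : Fin 1 => encM ((G.nbrFinset v).val.map
          (fun v' => fun _ : Fin 1 => encS F (sigSt F u G k v'))))) 1)).map
        (fun t => decS F (t 0)))) =
    encS F (sigSt F u G (k + 1) v)
  rw [com_arg F u G (k + 1) k v, step_sig F u hroot hacyc G v k]

lemma finL_apply (G : LabGraph p) (k : ℕ) (hk : Dmax F u ≤ k) :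
    (finL F u (k + 1)).apply G (fun v _ => encS F (sigSt F u G k v)) =
      fun v => Fin.append (G.embG v)
        (fun i => (subCnt (F i) (u i) G (u i) v : ℝ)) := by
  funext v
  show Fin.append
      (stepS F u (k + 1)
        (decS F ((Fin.append (fun _ : Fin 1 => encS F (sigSt F u G k v))
          (fun _ : Fin 1 => encM ((G.nbrFinset v).val.map
            (fun v' => fun _ : Fin 1 => encS F (sigSt F u G k v'))))) 0))
        ((decM ((Fin.append (fun _ : Fin 1 => encS F (sigSt F u G k v))
          (fun _ : Fin 1 => encM ((G.nbrFinset v).val.map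
            (fun v' => fun _ : Fin 1 => encS F (sigSt F u G k v'))))) 1)).map
          (fun t => decS F (t 0)))).1
      (fun i =>
        ((stepS F u (k + 1)
          (decS F ((Fin.append (fun _ : Fin 1 => encS F (sigSt F u G k v))
            (fun _ : Fin 1 => encM ((G.nbrFinset v).val.map
              (fun v' => fun _ : Fin 1 => encS F (sigSt F u G k v'))))) 0))
          ((decM ((Fin.append (fun _ : Fin 1 => encS F (sigSt F u G k v))
            (fun _ : Fin 1 => encM ((G.nbrFinset v).val.map
              (fun v' => fun _ : Fin 1 => encS F (sigSt F u G k v'))))) 1)).map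
            (fun t => decS F (t 0)))).2 i (u i) : ℝ)) =
      Fin.append (G.embG v) (fun i => (subCnt (F i) (u i) G (u i) v : ℝ))
  rw [com_arg F u G (k + 1) k v, step_sig F u hroot hacyc G v k]
  have h1 : (sigSt F u G (k + 1) v).1 = G.embG v := rfl
  have h2 : (fun i => (((sigSt F u G (k + 1) v).2 i (u i) : ℕ) : ℝ)) =
      fun i => (subCnt (F i) (u i) G (u i) v : ℝ) := by
    funext i
    have hh : (sigSt F u G (k + 1) v).2 i (u i) = subCnt (F i) (u i) G (u i) v := by
      simp only [sigSt]
      rw [dep_root, if_pos (by omega)]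
    rw [hh]
  rw [h1, h2]

lemma firstL_apply (G : LabGraph p) :
    (firstL F u).apply G G.embG = fun v _ => encS F (sigSt F u G 1 v) := by
  funext v j
  show encS F (stepS F u 1
      ((fun j => Fin.append (G.embG v)
        (fun _ : Fin p => (0 : ℝ)) (Fin.castAdd p j)), fun _ _ => 0)
      (0 : Multiset (St F))) = encS F (sigSt F u G 1 v)
  have hx : (fun j => Fin.append (G.embG v)
      (fun _ : Fin p => (0 : ℝ)) (Fin.castAdd p j)) = G.embG v :=
    funext fun j => Fin.append_left _ _ j
  rw [hx, step_one F u hroot hacyc G v]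

/-- The chain of layers after the first one. -/
noncomputable def tailGNN : ℕ → ℕ → GNN 1 (p + m)
  | 0, k => .last (finL F u (k + 1))
  | (j + 1), k => .cons (midL F u (k + 1)) (tailGNN j (k + 1))

lemma tailGNN_run (G : LabGraph p) :
    ∀ (j k : ℕ), Dmax F u ≤ k + j →
      (tailGNN F u j k).run G (fun v _ => encS F (sigSt F u G k v)) =
        fun v => Fin.append (G.embG v) (fun i => (subCnt (F i) (u i) G (u i) v : ℝ)) := by
  intro j
  induction j with
  | zero =>
    intro k hk
    show (finL F u (k + 1)).apply G _ = _
    exact finL_apply F u hroot hacyc G k (by omega)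
  | succ j ih =>
    intro k hk
    show (tailGNN F u j (k + 1)).run G ((midL F u (k + 1)).apply G _) = _
    rw [midL_apply F u hroot hacyc G k]
    exact ih (k + 1) (by omega)

/-- The GNN computing all the homomorphism counts. -/
noncomputable def mainGNN : GNN p (p + m) :=
  .cons (firstL F u) (tailGNN F u (Dmax F u) 1)

lemma mainGNN_run (G : LabGraph p) (v : G.V) :
    (mainGNN F u).run G G.embG v =
      Fin.append (G.embG v) (fun i => (homCount (F i) G (u i) v : ℝ)) := by
  have h1 : (mainGNN F u).run G G.embG =
      (tailGNN F u (Dmax F u) 1).run G ((firstL F u).apply G G.embG) := rfl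
  rw [h1, firstL_apply F u hroot hacyc G,
    tailGNN_run F u hroot hacyc G (Dmax F u) 1 (by omega)]
  show Fin.append (G.embG v) (fun i => (subCnt (F i) (u i) G (u i) v : ℝ)) = _
  have hc : (fun i => (subCnt (F i) (u i) G (u i) v : ℝ)) =
      fun i => (homCount (F i) G (u i) v : ℝ) := by
    funext i
    rw [subCnt_root (hroot i) (hacyc i) G v]
  rw [hc]

end Layers

end GNNHom

/-- For any finite set `𝔉` of acyclic rooted graphs there is a
`(|P|, |P|+|𝔉|)`-GNN computing `emb_G(v) ⊕ hom(𝔉,(G,v))` at every node of every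
pointed graph. -/
theorem gnn_hom_counts_acyclic (p m : ℕ) (F : Fin m → LabGraph p)
    (u : ∀ i, (F i).V) (hroot : ∀ i, (F i).Rooted (u i))
    (hacyc : ∀ i, (F i).Acyclic) :
    ∃ A : GNN p (p + m),
      ∀ (G : LabGraph p) (v : G.V),
        A.run G G.embG v =
          Fin.append (G.embG v) (fun i => (homCount (F i) G (u i) v : ℝ)) := by
  exact ⟨GNNHom.mainGNN F u, fun G v => GNNHom.mainGNN_run F u hroot hacyc G v⟩
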